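/- Let H be a numerical semigroup (a submonoid of ℕ with finite complement) with smallest nonzero element n₁(H) ≥ 3 and genus g(H) = #(ℕ \ H). Then for each i with 1 ≤ i ≤ g(H) - 2, the i-th smallest positive element nᵢ(H) of H satisfies nᵢ(H) ≥ 2i + 1. -/

import Mathlib

/-- For a numerical semigroup `H` (submonoid of ℕ with finite complement) with
multiplicity `n₁(H) ≥ 3` and genus `g`, the `i`-th smallest positive element
satisfies `nᵢ(H) ≥ 2i+1` for `1 ≤ i ≤ g-2`.  Here the `i`-th positive element
(1-indexed) is `Nat.nth (fun n => 0 < n ∧ n ∈ H) (i-1)`. -/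
theorem stmt0 (H : Set ℕ) (h0 : (0 : ℕ) ∈ H)
    (hadd : ∀ a ∈ H, ∀ b ∈ H, a + b ∈ H)
    (hfin : (Hᶜ : Set ℕ).Finite)
    (g : ℕ) (hg : g = Set.ncard (Hᶜ : Set ℕ))
    (hn1 : 3 ≤ Nat.nth (fun n => 0 < n ∧ n ∈ H) 0)
    (i : ℕ) (h1 : 1 ≤ i) (h2 : i ≤ g - 2) :
    2 * i + 1 ≤ Nat.nth (fun n => 0 < n ∧ n ∈ H) (i - 1) := by
  classical
  set P : ℕ → Prop := fun n => 0 < n ∧ n ∈ H with hPdef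
  -- P is infinite
  have hPinf : (setOf P).Infinite := by
    have hsub : (setOf P)ᶜ ⊆ Hᶜ ∪ {0} := by
      intro x hx
      change ¬ (0 < x ∧ x ∈ H) at hx
      simp only [Set.mem_compl_iff, Set.mem_setOf_eq, hPdef, not_and_or, not_lt] at hx
      rcases hx with h | h
      · right; simp [Nat.le_zero.mp h]
      · left; exact h
    have hfc : ((setOf P)ᶜ).Finite := (hfin.union (Set.finite_singleton 0)).subset hsub
    simpa using hfc.infinite_compl
  have hgi : i + 2 ≤ g := by omega
  set n1 : ℕ := Nat.nth P 0 with hn1def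
  have hn1P : P n1 := Nat.nth_mem_of_infinite hPinf 0
  have hminP : ∀ x, P x → n1 ≤ x := by
    intro x hx
    rw [hn1def, Nat.nth_zero]
    exact Nat.sInf_le hx
  set N : ℕ := Nat.nth P (i - 1) with hNdef
  have hNP : P N := Nat.nth_mem_of_infinite hPinf (i - 1)
  by_contra hcon
  push_neg at hcon
  have hNle : N ≤ 2 * i := by omega
  have hn1N : n1 ≤ N := hminP N hNP
  have hi2 : 2 ≤ i := by
    by_contra hi
    have hieq : i = 1 := by omega
    have : N = n1 := by rw [hNdef, hn1def, hieq]
    omega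
  -- counting
  have hcountN : Nat.count P N = i - 1 := by
    rw [hNdef]; exact Nat.count_nth_of_infinite hPinf (i - 1)
  have hcountN1 : Nat.count P (N + 1) = i := by
    rw [Nat.count_succ, if_pos hNP]; omega
  -- genus bound: if everything from M on is in H then g ≤ M - count P M - 1
  have genus_le : ∀ M : ℕ, 0 < M → (∀ x, M ≤ x → x ∈ H) → M ≤ g + Nat.count P M → False := by
    intro M hM0 hall hM
    have hHc : Hᶜ = ↑((Finset.range M).filter (fun x => x ∉ H)) := by
      ext x
      simp only [Set.mem_compl_iff, Finset.coe_filter, Set.mem_setOf_eq, Finset.mem_range]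
      constructor
      · intro hx
        refine ⟨?_, hx⟩
        by_contra h
        exact hx (hall x (le_of_not_gt h))
      · exact fun h => h.2
    have hsub2 : ((Finset.range M).filter (fun x => x ∉ H)) ⊆
        ((Finset.range M).filter (fun x => ¬ P x)).erase 0 := by
      intro x hx
      simp only [Finset.mem_filter, Finset.mem_range] at hx
      refine Finset.mem_erase.mpr ⟨?_, ?_⟩
      · rintro rfl; exact hx.2 h0
      · simp only [Finset.mem_filter, Finset.mem_range, hPdef]
        exact ⟨hx.1, fun hp => hx.2 hp.2⟩
    have hsplit : ((Finset.range M).filter P).card +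
        ((Finset.range M).filter (fun x => ¬ P x)).card = M := by
      rw [Finset.card_filter_add_card_filter_not, Finset.card_range]
    have hPcard : ((Finset.range M).filter P).card = Nat.count P M :=
      (Nat.count_eq_card_filter_range P M).symm
    have hgcard : g = ((Finset.range M).filter (fun x => x ∉ H)).card := by
      rw [hg, hHc, Set.ncard_coe_finset]
    have hle := Finset.card_le_card hsub2
    have h0mem : (0 : ℕ) ∈ (Finset.range M).filter (fun x => ¬ P x) := by
      simp only [Finset.mem_filter, Finset.mem_range, hPdef]
      exact ⟨hM0, by simp⟩
    have hpos : 0 < ((Finset.range M).filter (fun x => ¬ P x)).card :=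
      Finset.card_pos.mpr ⟨0, h0mem⟩
    have herase := Finset.card_erase_of_mem h0mem
    omega
  -- there is a gap above N
  have hgap : ∃ x, x ∉ H ∧ N < x := by
    by_contra hng
    push_neg at hng
    refine genus_le (N + 1) (by omega) (fun x hx => ?_) (by omega)
    by_contra hxH
    have := hng x hxH
    omega
  set l : ℕ := Nat.find hgap with hldef
  have hlspec : l ∉ H ∧ N < l := Nat.find_spec hgap
  have hlmin : ∀ y, N < y → y < l → y ∈ H := by
    intro y hy1 hy2
    by_contra hyH
    exact Nat.find_min hgap hy2 ⟨hyH, hy1⟩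
  -- the sets
  set S : Finset ℕ := (Finset.range (N + 1)).filter P with hSdef
  have hScard : S.card = i := by
    rw [hSdef, ← Nat.count_eq_card_filter_range, hcountN1]
  have hSmem : ∀ x, x ∈ S ↔ x ≤ N ∧ P x := by
    intro x
    simp only [hSdef, Finset.mem_filter, Finset.mem_range, Nat.lt_succ_iff]
  set B : Finset ℕ := S.image (fun x => l - x) with hBdef
  have hBcard : B.card = i := by
    rw [hBdef, Finset.card_image_of_injOn, hScard]
    intro x hx y hy hxy
    have hx' := (hSmem x).mp hx
    have hy' := (hSmem y).mp hy
    simp only at hxy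
    omega
  set A : Finset ℕ := (Finset.range N).filter (fun x => ¬ P x) with hAdef
  have hAmem : ∀ x, x ∈ A ↔ x < N ∧ ¬ P x := by
    intro x
    simp only [hAdef, Finset.mem_filter, Finset.mem_range]
  have hAcard : A.card = N - (i - 1) := by
    have hsplit : ((Finset.range N).filter P).card + A.card = N := by
      rw [hAdef, Finset.card_filter_add_card_filter_not, Finset.card_range]
    have hPcard : ((Finset.range N).filter P).card = Nat.count P N :=
      (Nat.count_eq_card_filter_range P N).symm
    omega
  have hBmem : ∀ x, x ∈ B → ∃ s, s ≤ N ∧ P s ∧ x = l - s := by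
    intro x hx
    rw [hBdef, Finset.mem_image] at hx
    obtain ⟨s, hs, rfl⟩ := hx
    exact ⟨s, ((hSmem s).mp hs).1, ((hSmem s).mp hs).2, rfl⟩
  have hBsubA : B ⊆ A := by
    intro x hx
    obtain ⟨s, hsN, hsP, rfl⟩ := hBmem x hx
    have hsl : s < l := by omega
    have hlsH : l - s ∉ H := by
      intro hmem
      have := hadd s hsP.2 (l - s) hmem
      rw [show s + (l - s) = l by omega] at this
      exact hlspec.1 this
    rw [hAmem]
    constructor
    · -- l - s < N
      by_contra hge
      push_neg at hge
      rcases Nat.lt_or_ge N (l - s) with hlt | hle'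
      · exact hlsH (hlmin (l - s) hlt (by omega))
      · have : l - s = N := by omega
        rw [this] at hlsH
        exact hlsH hNP.2
    · exact fun hp => hlsH hp.2
  have h0A : (0 : ℕ) ∈ A := by
    rw [hAmem]
    exact ⟨by omega, by simp [hPdef]⟩
  have h0B : (0 : ℕ) ∉ B := by
    intro hx
    obtain ⟨s, hsN, hsP, heq⟩ := hBmem 0 hx
    omega
  have hinsub : insert 0 B ⊆ A := by
    intro x hx
    rcases Finset.mem_insert.mp hx with rfl | hx
    · exact h0A
    · exact hBsubA hx
  have hcardins : (insert 0 B).card = i + 1 := by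
    rw [Finset.card_insert_of_notMem h0B, hBcard]
  have hcardle : i + 1 ≤ N - (i - 1) := by
    rw [← hcardins, ← hAcard]
    exact Finset.card_le_card hinsub
  have hN2i : N = 2 * i := by omega
  have hAeq : A = insert 0 B := by
    refine (Finset.eq_of_subset_of_card_le hinsub ?_).symm
    rw [hAcard, hcardins]
    omega
  -- l = 2i+1
  have h1H : (1 : ℕ) ∉ H := by
    intro h
    have := hminP 1 ⟨one_pos, h⟩
    omega
  have h2H : (2 : ℕ) ∉ H := by
    intro h
    have := hminP 2 ⟨two_pos, h⟩
    omega
  have hleq : l = 2 * i + 1 := by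
    have h1A : (1 : ℕ) ∈ A := by
      rw [hAmem]
      refine ⟨by omega, ?_⟩
      simp only [hPdef, not_and]
      exact fun _ => h1H
    rw [hAeq, Finset.mem_insert] at h1A
    rcases h1A with h | h
    · omega
    · obtain ⟨s, hsN, hsP, heq⟩ := hBmem 1 h
      omega
  -- the pairing
  have pairing : ∀ x, 0 < x → x ≤ 2 * i → x ∉ H → (2 * i + 1 - x) ∈ H := by
    intro x hx1 hx2 hxH
    rcases Nat.eq_or_lt_of_le hx2 with heq | hlt
    · exact absurd (heq ▸ hN2i ▸ hNP.2) hxH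
    · have hxA : x ∈ A := by
        rw [hAmem]
        refine ⟨by omega, ?_⟩
        simp only [hPdef, not_and]
        exact fun _ => hxH
      rw [hAeq, Finset.mem_insert] at hxA
      rcases hxA with h | h
      · omega
      · obtain ⟨s, hsN, hsP, heq⟩ := hBmem x h
        have : 2 * i + 1 - x = s := by omega
        rw [this]
        exact hsP.2
  have h2iH : (2 * i) ∈ H := hN2i ▸ hNP.2
  have h2im1H : (2 * i - 1) ∈ H := by
    have := pairing 2 two_pos (by omega) h2H
    rwa [show 2 * i + 1 - 2 = 2 * i - 1 by omega] at this
  -- second gap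
  have hgap2 : ∃ x, x ∉ H ∧ 2 * i + 1 < x := by
    by_contra hng
    push_neg at hng
    have hnotP : ¬ P (N + 1) := by
      intro hp
      have h' : N + 1 = l := by omega
      exact hlspec.1 (h' ▸ hp.2)
    have hcount2 : Nat.count P (2 * i + 2) = i := by
      rw [show 2 * i + 2 = (N + 1) + 1 by omega, Nat.count_succ, if_neg hnotP, hcountN1]
      omega
    refine genus_le (2 * i + 2) (by omega) (fun x hx => ?_) (by omega)
    by_contra hxH
    have := hng x hxH
    omega
  set m : ℕ := Nat.find hgap2 with hmdef
  have hmspec : m ∉ H ∧ 2 * i + 1 < m := Nat.find_spec hgap2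
  have hmmin : ∀ y, 2 * i + 1 < y → y < m → y ∈ H := by
    intro y hy1 hy2
    by_contra hyH
    exact Nat.find_min hgap2 hy2 ⟨hyH, hy1⟩
  have hn12i : n1 ≤ 2 * i := by omega
  have hn13 : 3 ≤ n1 := hn1
  -- case analysis on m
  rcases Nat.lt_or_ge m (2 * i + 3) with hm | hm3
  · -- m = 2i + 2
    have hmeq : m = 2 * i + 2 := by omega
    have hxH : (2 * i + 2 - n1) ∉ H := by
      intro h
      have := hadd n1 hn1P.2 _ h
      rw [show n1 + (2 * i + 2 - n1) = 2 * i + 2 by omega, ← hmeq] at this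
      exact hmspec.1 this
    have := pairing (2 * i + 2 - n1) (by omega) (by omega) hxH
    rw [show 2 * i + 1 - (2 * i + 2 - n1) = n1 - 1 by omega] at this
    have := hminP (n1 - 1) ⟨by omega, this⟩
    omega
  · -- m ≥ 2i + 3
    have hcH : (m - n1) ∉ H := by
      intro h
      have := hadd n1 hn1P.2 _ h
      rw [show n1 + (m - n1) = m by omega] at this
      exact hmspec.1 this
    rcases Nat.lt_or_ge (2 * i) (m - n1) with hc1 | hc1
    · rcases Nat.eq_or_lt_of_le hc1 with hc2 | hc2
      · -- m - n1 = 2i + 1, so m = n1 + 2i + 1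
        have hmeq : m = n1 + 2 * i + 1 := by omega
        have dvd_aux : ∀ x, x ∈ H → x ≤ 2 * i → n1 ∣ x := by
          intro x
          induction x using Nat.strong_induction_on with
          | _ x ih =>
            intro hxH hxle
            rcases Nat.eq_zero_or_pos x with rfl | hx0
            · exact dvd_zero n1
            · have hxn1 : n1 ≤ x := hminP x ⟨hx0, hxH⟩
              rcases Nat.eq_or_lt_of_le hxn1 with heq | hlt
              · exact heq ▸ dvd_refl n1
              · have hyH : (m - x) ∉ H := by
                  intro h
                  have := hadd x hxH _ h
                  rw [show x + (m - x) = m by omega] at this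
                  exact hmspec.1 this
                have hp := pairing (m - x) (by omega) (by omega) hyH
                rw [show 2 * i + 1 - (m - x) = x - n1 by omega] at hp
                have := ih (x - n1) (by omega) hp (by omega)
                have : n1 ∣ (x - n1) + n1 := Dvd.dvd.add this dvd_rfl
                rwa [show (x - n1) + n1 = x by omega] at this
        have d1 := dvd_aux (2 * i) h2iH le_rfl
        have d2 := dvd_aux (2 * i - 1) h2im1H (by omega)
        have hdvd1 : n1 ∣ 1 := by
          have := Nat.dvd_sub d1 d2
          rwa [show 2 * i - (2 * i - 1) = 1 by omega] at this
        have := Nat.le_of_dvd one_pos hdvd1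
        omega
      · -- m - n1 ≥ 2i + 2 : contradiction with minimality of m
        have : (m - n1) ∈ H := hmmin (m - n1) (by omega) (by omega)
        exact hcH this
    · -- m - n1 ≤ 2i
      have hp := pairing (m - n1) (by omega) hc1 hcH
      have := hminP (2 * i + 1 - (m - n1)) ⟨by omega, hp⟩
      omega
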